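/- Let f be superquadratic on [0,∞) with subgradient C. Let x₁,...,xₙ ≥ 0, a₁,...,aₙ ≥ 0 with Aₙ = ∑aᵢ > 0, x̄ = (1/Aₙ)∑aᵢxᵢ, λᵢ ∈ [0,1], x̂ᵢ = (1-λᵢ)x̄ + λᵢxᵢ. Then (1/Aₙ)∑ aᵢ f(xᵢ) - (1/Aₙ)∑ aᵢ f(x̂ᵢ) ≤ (1/Aₙ)∑ aᵢ(1-λᵢ)C(xᵢ)(xᵢ - x̄) - (1/Aₙ)∑ aᵢ f((1-λᵢ)|x̄ - xᵢ|). -/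
import Mathlib


/-- converse Jensen-type inequality for superquadratic functions, interpolated points. -/
theorem stmt14 (f C : ℝ → ℝ)
    (hsq : ∀ x, 0 ≤ x → ∀ y, 0 ≤ y → f x + C x * (y - x) + f |y - x| ≤ f y)
    (n : ℕ) (hn : 0 < n) (w x : ℕ → ℝ) (A xbar : ℝ)
    (hA : A = ∑ i ∈ Finset.range n, w i) (hApos : 0 < A)
    (hw : ∀ i < n, 0 ≤ w i)
    (hx : ∀ i < n, 0 ≤ x i)
    (hxbar : xbar = (1 / A) * ∑ i ∈ Finset.range n, w i * x i)
    (l xh : ℕ → ℝ) (hl : ∀ i < n, l i ∈ Set.Icc (0 : ℝ) 1)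
    (hxh : ∀ i, xh i = (1 - l i) * xbar + l i * x i) :
    (1 / A) * ∑ i ∈ Finset.range n, w i * f (x i) -
        (1 / A) * ∑ i ∈ Finset.range n, w i * f (xh i) ≤
      (1 / A) * ∑ i ∈ Finset.range n, w i * ((1 - l i) * C (x i) * (x i - xbar)) -
        (1 / A) * ∑ i ∈ Finset.range n, w i * f ((1 - l i) * |xbar - x i|) := by
  have hxbar0 : 0 ≤ xbar := by
    rw [hxbar]
    apply mul_nonneg (by positivity)
    apply Finset.sum_nonneg
    intro i hi
    exact mul_nonneg (hw i (Finset.mem_range.mp hi)) (hx i (Finset.mem_range.mp hi))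
  rw [← mul_sub, ← mul_sub, ← Finset.sum_sub_distrib, ← Finset.sum_sub_distrib]
  apply mul_le_mul_of_nonneg_left _ (by positivity)
  apply Finset.sum_le_sum
  intro i hi
  have hi' := Finset.mem_range.mp hi
  obtain ⟨hl0, hl1⟩ := hl i hi'
  have hxi := hx i hi'
  have hxh0 : 0 ≤ xh i := by
    rw [hxh i]
    have := mul_nonneg (by linarith : (0:ℝ) ≤ 1 - l i) hxbar0
    nlinarith [mul_nonneg hl0 hxi]
  have key := hsq (x i) hxi (xh i) hxh0
  have habs : |xh i - x i| = (1 - l i) * |xbar - x i| := by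
    rw [hxh i]
    rw [show (1 - l i) * xbar + l i * x i - x i = (1 - l i) * (xbar - x i) by ring]
    rw [abs_mul, abs_of_nonneg (by linarith : (0:ℝ) ≤ 1 - l i)]
  rw [habs] at key
  have heq : xh i - x i = (1 - l i) * (xbar - x i) := by rw [hxh i]; ring
  rw [heq] at key
  rw [← mul_sub, ← mul_sub]
  apply mul_le_mul_of_nonneg_left _ (hw i hi')
  nlinarith [key]
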